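/- Let f_1, …, f_m be real polynomials on ℝ^n and let A = {x ∈ ℝ^n : f_i(x) ≥ 0 for all i = 1,…,m}. Assume A is nonempty and convex, and that for every x ∈ A the set of gradients {∇f_i(x) : i such that f_i(x) = 0} is linearly independent. Then for every p ∈ ℝ^n and u ∈ ℝ^n, u is the metric projection of p onto A if and only if there exist c_1, …, c_m ∈ ℝ such that u − p = Σ_{i=1}^m c_i ∇f_i(u), f_i(u) ≥ 0, c_i ≥ 0, and c_i f_i(u) = 0 for all i = 1,…,m. -/

import Mathlib

open Filter Topology

open scoped RealInnerProductSpace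

section Aux

variable {E : Type*} [NormedAddCommGroup E] [InnerProductSpace ℝ E] [FiniteDimensional ℝ E]

theorem aux_inner_gradient (f : E → ℝ) (x w : E) :
    ⟪gradient f x, w⟫ = fderiv ℝ f x w := by
  simp [gradient, InnerProductSpace.toDual_symm_apply]

theorem aux_slope_nonneg {φ : ℝ → ℝ} {D : ℝ} (h : HasDerivAt φ D 0) (h0 : φ 0 = 0)
    (hpos : ∀ᶠ t in 𝓝[>] (0:ℝ), 0 ≤ φ t) : 0 ≤ D := by
  have hs := (hasDerivAt_iff_tendsto_slope.1 h).mono_left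
    (nhdsWithin_mono 0 (show Set.Ioi (0:ℝ) ⊆ {(0:ℝ)}ᶜ from fun x hx => ne_of_gt hx))
  refine ge_of_tendsto hs ?_
  filter_upwards [hpos, self_mem_nhdsWithin] with t ht ht'
  have : slope φ 0 t = φ t / t := by simp [slope_def_field, h0]
  rw [this]
  exact div_nonneg ht (le_of_lt ht')

theorem aux_eventually_pos {φ : ℝ → ℝ} {D : ℝ} (h : HasDerivAt φ D 0) (h0 : φ 0 = 0)
    (hD : 0 < D) : ∀ᶠ t in 𝓝[>] (0:ℝ), 0 < φ t := by
  have hs := (hasDerivAt_iff_tendsto_slope.1 h).mono_left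
    (nhdsWithin_mono 0 (show Set.Ioi (0:ℝ) ⊆ {(0:ℝ)}ᶜ from fun x hx => ne_of_gt hx))
  have h2 : ∀ᶠ t in 𝓝[>] (0:ℝ), 0 < slope φ 0 t :=
    hs.eventually (eventually_gt_nhds hD)
  filter_upwards [h2, self_mem_nhdsWithin] with t ht ht'
  have hsl : slope φ 0 t = φ t / t := by simp [slope_def_field, h0]
  rw [hsl] at ht
  have := mul_pos ht (show (0:ℝ) < t from ht')
  rwa [div_mul_cancel₀] at this
  exact ne_of_gt ht'

theorem aux_exists_dual {ι : Type*} [Fintype ι] {g : ι → E}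
    (hg : LinearIndependent ℝ g) : ∃ d : E, ∀ i, ⟪g i, d⟫ = 1 := by
  classical
  set W := Submodule.span ℝ (Set.range g) with hW
  let T : W →ₗ[ℝ] (ι → ℝ) :=
    { toFun := fun w => fun i => ⟪g i, (w : E)⟫
      map_add' := by intro a b; funext i; simp [inner_add_right]
      map_smul' := by intro r a; funext i; simp [inner_smul_right] }
  have hinj : Function.Injective T := by
    rw [← LinearMap.ker_eq_bot, Submodule.eq_bot_iff]
    rintro ⟨w, hw⟩ hker
    have hw0 : ∀ u ∈ W, ⟪u, w⟫ = 0 := by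
      intro u hu
      induction hu using Submodule.span_induction with
      | mem x hx =>
        obtain ⟨i, rfl⟩ := hx
        exact congrFun hker i
      | zero => simp
      | add x y _ _ hx hy => simp [inner_add_left, hx, hy]
      | smul r x _ hx => simp [inner_smul_left, hx]
    have : ⟪w, w⟫ = 0 := hw0 w hw
    simpa using inner_self_eq_zero.mp this
  have hdim : Module.finrank ℝ W = Module.finrank ℝ (ι → ℝ) := by
    rw [hW, finrank_span_eq_card hg, Module.finrank_pi]
  have hsurj : Function.Surjective T :=
    (LinearMap.injective_iff_surjective_of_finrank_eq_finrank hdim).1 hinj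
  obtain ⟨w, hw⟩ := hsurj 1
  exact ⟨(w : E), fun i => congrFun hw i⟩

theorem aux_farkas {ι : Type*} [Fintype ι] {g : ι → E} (hg : LinearIndependent ℝ g)
    {v : E} (hv : ∀ d : E, (∀ i, 0 ≤ ⟪g i, d⟫) → 0 ≤ ⟪v, d⟫) :
    ∃ c : ι → ℝ, (∀ i, 0 ≤ c i) ∧ v = ∑ i, c i • g i := by
  classical
  let T : (ι → ℝ) →ₗ[ℝ] E :=
    { toFun := fun c => ∑ i, c i • g i
      map_add' := by intro a b; simp [add_smul, Finset.sum_add_distrib]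
      map_smul' := by intro r a; simp [smul_smul, Finset.smul_sum] }
  have hTinj : LinearMap.ker T = ⊥ := by
    rw [LinearMap.ker_eq_bot']
    intro c hc
    funext i
    exact Fintype.linearIndependent_iff.1 hg c hc i
  let K : ConvexCone ℝ E :=
    { carrier := T '' {c | ∀ i, 0 ≤ c i}
      smul_mem' := by
        rintro t ht x ⟨c, hc, rfl⟩
        exact ⟨t • c, fun i => mul_nonneg (le_of_lt ht) (hc i), T.map_smul t c⟩
      add_mem' := by
        rintro x ⟨c, hc, rfl⟩ y ⟨c', hc', rfl⟩
        exact ⟨c + c', fun i => add_nonneg (hc i) (hc' i), T.map_add c c'⟩ }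
  have hKne : (K : Set E).Nonempty := ⟨0, 0, fun i => le_refl 0, by simp⟩
  have hKclosed : IsClosed (K : Set E) := by
    have hemb := LinearMap.isClosedEmbedding_of_injective (𝕜 := ℝ) hTinj
    refine hemb.isClosedMap _ ?_
    have : {c : ι → ℝ | ∀ i, 0 ≤ c i} = ⋂ i, {c | 0 ≤ c i} := by ext; simp
    rw [this]
    exact isClosed_iInter fun i => isClosed_le continuous_const (continuous_apply i)
  by_contra hcon
  have hvK : v ∉ K := by
    intro hmem
    obtain ⟨c, hc, hT⟩ := hmem
    exact hcon ⟨c, hc, hT.symm⟩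
  let P : ProperCone ℝ E :=
    { carrier := (K : Set E)
      add_mem' := fun ha hb => K.add_mem ha hb
      zero_mem' := ⟨0, fun i => le_refl 0, by simp⟩
      smul_mem' := by
        rintro ⟨r, hr⟩ x ⟨a, ha, rfl⟩
        exact ⟨r • a, fun i => mul_nonneg hr (ha i), T.map_smul r a⟩
      isClosed' := hKclosed }
  obtain ⟨y, hy1, hy2'⟩ := P.hyperplane_separation' (x₀ := v) hvK
  have hy2 : ⟪y, v⟫ < 0 := by rwa [real_inner_comm]
  have hgK : ∀ i, g i ∈ K := by
    intro i
    refine ⟨Pi.single i 1, fun j => by by_cases h : j = i <;> simp [Pi.single_apply, h], ?_⟩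
    show T (Pi.single i 1) = g i
    have : T (Pi.single i 1) = ∑ j, (Pi.single i (1:ℝ) : ι → ℝ) j • g j := rfl
    rw [this, Finset.sum_eq_single i] <;> simp +contextual [Pi.single_apply]
  have := hv y (fun i => hy1 (g i) (hgK i))
  rw [real_inner_comm] at hy2
  linarith

end Aux

theorem aux_diff (n : ℕ) (P : MvPolynomial (Fin n) ℝ) :
    Differentiable ℝ (fun y : EuclideanSpace ℝ (Fin n) => MvPolynomial.eval (fun j => y j) P) := by
  intro x
  have h : AnalyticAt ℝ
      (fun y : EuclideanSpace ℝ (Fin n) => MvPolynomial.aeval (fun j => y j) P) x := by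
    refine AnalyticAt.aeval_mvPolynomial (fun i => ?_) P
    exact (EuclideanSpace.proj i : EuclideanSpace ℝ (Fin n) →L[ℝ] ℝ).analyticAt x
  have he : (fun y : EuclideanSpace ℝ (Fin n) => MvPolynomial.aeval (fun j => y j) P)
      = fun y : EuclideanSpace ℝ (Fin n) => MvPolynomial.eval (fun j => y j) P := by
    funext y
    rw [MvPolynomial.aeval_def, Algebra.algebraMap_self, MvPolynomial.eval₂_id]
  rw [he] at h
  exact h.differentiableAt

/-- `u` is the metric projection of `p` onto `S`. -/
def IsMetricProj {E : Type*} [NormedAddCommGroup E] (S : Set E) (p u : E) : Prop :=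
  u ∈ S ∧ ∀ s ∈ S, ‖u - p‖ ≤ ‖s - p‖

theorem stmt0 (n m : ℕ) (f : Fin m → MvPolynomial (Fin n) ℝ)
    (A : Set (EuclideanSpace ℝ (Fin n)))
    (hA : A = {x | ∀ i, 0 ≤ MvPolynomial.eval (fun j => x j) (f i)})
    (hne : A.Nonempty) (hconv : Convex ℝ A)
    (hLI : ∀ x ∈ A, LinearIndependent ℝ
      (fun i : {i : Fin m // MvPolynomial.eval (fun j => x j) (f i) = 0} =>
        gradient (fun y : EuclideanSpace ℝ (Fin n) =>
          MvPolynomial.eval (fun j => y j) (f i.1)) x))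
    (p u : EuclideanSpace ℝ (Fin n)) :
    IsMetricProj A p u ↔
      ∃ c : Fin m → ℝ,
        u - p = ∑ i, c i • gradient (fun y : EuclideanSpace ℝ (Fin n) =>
            MvPolynomial.eval (fun j => y j) (f i)) u ∧
        ∀ i, 0 ≤ MvPolynomial.eval (fun j => u j) (f i) ∧ 0 ≤ c i ∧
          c i * MvPolynomial.eval (fun j => u j) (f i) = 0 := by
  classical
  set g : Fin m → EuclideanSpace ℝ (Fin n) :=
    fun i => gradient (fun y : EuclideanSpace ℝ (Fin n) =>
      MvPolynomial.eval (fun j => y j) (f i)) u with hg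
  have hray : ∀ (i : Fin m) (d : EuclideanSpace ℝ (Fin n)),
      HasDerivAt (fun t : ℝ => MvPolynomial.eval (fun j => (u + t • d) j) (f i))
        ⟪g i, d⟫ 0 := by
    intro i d
    have hline : HasDerivAt (fun t : ℝ => u + t • d) d 0 := by
      simpa using ((hasDerivAt_id (0:ℝ)).smul_const d).const_add u
    have hF := (aux_diff n (f i) (u + (0:ℝ) • d)).hasFDerivAt
    have hcomp := hF.comp_hasDerivAt 0 hline
    simp only [zero_smul, add_zero] at hcomp
    have hkey : ⟪g i, d⟫ = fderiv ℝ (fun y : EuclideanSpace ℝ (Fin n) =>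
        MvPolynomial.eval (fun j => y j) (f i)) u d := aux_inner_gradient _ _ _
    rw [hkey]
    exact hcomp
  constructor
  · rintro ⟨huA, hproj⟩
    have hu' : ∀ i, 0 ≤ MvPolynomial.eval (fun j => u j) (f i) := by
      rw [hA] at huA; exact huA
    -- variational inequality
    have hvar : ∀ s ∈ A, 0 ≤ ⟪u - p, s - u⟫ := by
      intro s hs
      by_contra hneg
      push_neg at hneg
      have hw0 : s - u ≠ 0 := by
        intro h
        rw [h, inner_zero_right] at hneg; exact lt_irrefl 0 hneg
      have hq : 0 < ‖s - u‖^2 := by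
        have := norm_pos_iff.2 hw0
        positivity
      set I := ⟪u - p, s - u⟫ with hI
      set q := ‖s - u‖^2 with hqdef
      set t := min 1 (-I / q) with ht
      have ht0 : 0 < t := lt_min one_pos (div_pos (neg_pos.2 hneg) hq)
      have ht1 : t ≤ 1 := min_le_left _ _
      have htq : t * q ≤ -I := by
        have h1 : t ≤ -I / q := min_le_right _ _
        calc t * q ≤ (-I / q) * q := mul_le_mul_of_nonneg_right h1 (le_of_lt hq)
        _ = -I := div_mul_cancel₀ _ (ne_of_gt hq)
      have hmem : u + t • (s - u) ∈ A := hconv.add_smul_sub_mem huA hs ⟨le_of_lt ht0, ht1⟩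
      have h1 := hproj _ hmem
      have h2 : u + t • (s - u) - p = (u - p) + t • (s - u) := by abel
      have h3 : ‖(u - p) + t • (s - u)‖^2 = ‖u - p‖^2 + 2 * (t * I) + t^2 * q := by
        rw [norm_add_sq_real, real_inner_smul_right, norm_smul, mul_pow, Real.norm_eq_abs, sq_abs]
      rw [h2] at h1
      nlinarith [norm_nonneg (u - p), norm_nonneg ((u - p) + t • (s - u)),
        mul_le_mul_of_nonneg_left htq (le_of_lt ht0)]
    have hLIu := hLI u huA
    obtain ⟨d₀, hd₀⟩ := aux_exists_dual hLIu
    have hfeas : ∀ d : EuclideanSpace ℝ (Fin n),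
        (∀ i : {i : Fin m // MvPolynomial.eval (fun j => u j) (f i) = 0},
          0 < ⟪g i.1, d⟫) → ∃ t : ℝ, 0 < t ∧ u + t • d ∈ A := by
      intro d hd
      have hev : ∀ i : Fin m, ∀ᶠ t in 𝓝[>] (0:ℝ),
          0 ≤ MvPolynomial.eval (fun j => (u + t • d) j) (f i) := by
        intro i
        rcases eq_or_lt_of_le (hu' i) with hzero | hpos
        · have hphi0 : MvPolynomial.eval (fun j => (u + (0:ℝ) • d) j) (f i) = 0 := by
            simpa using hzero.symm
          have := aux_eventually_pos (hray i d) hphi0 (hd ⟨i, hzero.symm⟩)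
          filter_upwards [this] with t ht
          exact le_of_lt ht
        · have hcont : ContinuousAt
              (fun t : ℝ => MvPolynomial.eval (fun j => (u + t • d) j) (f i)) 0 :=
            (hray i d).continuousAt
          have h0 : (0:ℝ) < MvPolynomial.eval (fun j => (u + (0:ℝ) • d) j) (f i) := by
            simpa using hpos
          have h2 := hcont.eventually (eventually_gt_nhds h0)
          filter_upwards [h2.filter_mono nhdsWithin_le_nhds] with t ht
          exact le_of_lt ht
      have hall := (eventually_all.2 hev).and self_mem_nhdsWithin
      obtain ⟨t, ht, htpos⟩ := hall.exists
      refine ⟨t, htpos, ?_⟩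
      rw [hA]
      exact ht
    have hdual : ∀ d : EuclideanSpace ℝ (Fin n),
        (∀ i : {i : Fin m // MvPolynomial.eval (fun j => u j) (f i) = 0},
          0 ≤ ⟪g i.1, d⟫) → 0 ≤ ⟪u - p, d⟫ := by
      intro d hd
      have hstep : ∀ ε : ℝ, 0 < ε → 0 ≤ ⟪u - p, d⟫ + ε * ⟪u - p, d₀⟫ := by
        intro ε hε
        have hstrict : ∀ i : {i : Fin m // MvPolynomial.eval (fun j => u j) (f i) = 0},
            0 < ⟪g i.1, d + ε • d₀⟫ := by
          intro i
          rw [inner_add_right, real_inner_smul_right, hd₀ i]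
          have := hd i
          nlinarith
        obtain ⟨t, ht0, htA⟩ := hfeas (d + ε • d₀) hstrict
        have hv := hvar _ htA
        have heq : u + t • (d + ε • d₀) - u = t • (d + ε • d₀) := by abel
        rw [heq, real_inner_smul_right, inner_add_right, real_inner_smul_right] at hv
        nlinarith
      have hten : Tendsto (fun ε : ℝ => ⟪u - p, d⟫ + ε * ⟪u - p, d₀⟫) (𝓝[>] (0:ℝ))
          (𝓝 (⟪u - p, d⟫ + 0 * ⟪u - p, d₀⟫)) := by
        apply Tendsto.mono_left ?_ nhdsWithin_le_nhds
        exact tendsto_const_nhds.add (tendsto_id.mul tendsto_const_nhds)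
      have := ge_of_tendsto hten (by
        filter_upwards [self_mem_nhdsWithin] with ε hε
        exact hstep ε hε)
      simpa using this
    obtain ⟨c', hc'nonneg, hc'sum⟩ := aux_farkas hLIu hdual
    refine ⟨fun i => if h : MvPolynomial.eval (fun j => u j) (f i) = 0 then c' ⟨i, h⟩ else 0,
      ?_, ?_⟩
    · rw [hc'sum]
      have h1 : ∑ i : Fin m,
          (if h : MvPolynomial.eval (fun j => u j) (f i) = 0 then c' ⟨i, h⟩ else 0) • g i
          = ∑ i ∈ Finset.univ.filter
              (fun i => MvPolynomial.eval (fun j => u j) (f i) = 0),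
            (if h : MvPolynomial.eval (fun j => u j) (f i) = 0 then c' ⟨i, h⟩ else 0) • g i := by
        symm
        apply Finset.sum_filter_of_ne
        intro x _ hx
        by_contra hP
        rw [dif_neg hP, zero_smul] at hx
        exact hx rfl
      have h2 := Finset.sum_subtype
        (p := fun i : Fin m => MvPolynomial.eval (fun j => u j) (f i) = 0)
        (F := Subtype.fintype _)
        (Finset.univ.filter fun i : Fin m => MvPolynomial.eval (fun j => u j) (f i) = 0)
        (by simp)
        (fun i => (if h : MvPolynomial.eval (fun j => u j) (f i) = 0 then c' ⟨i, h⟩ else 0) • g i)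
      rw [h1, h2]
      apply Finset.sum_congr rfl
      intro i _
      rw [dif_pos i.2]
    · intro i
      refine ⟨hu' i, ?_, ?_⟩
      · by_cases h : MvPolynomial.eval (fun j => u j) (f i) = 0
        · simp only [dif_pos h]; exact hc'nonneg ⟨i, h⟩
        · simp [dif_neg h]
      · by_cases h : MvPolynomial.eval (fun j => u j) (f i) = 0
        · rw [h, mul_zero]
        · simp only [dif_neg h, zero_mul]
  · rintro ⟨c, hsum, hprop⟩
    have huA : u ∈ A := by
      rw [hA]
      exact fun i => (hprop i).1
    refine ⟨huA, fun s hs => ?_⟩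
    have key : 0 ≤ ⟪u - p, s - u⟫ := by
      rw [hsum, sum_inner]
      refine Finset.sum_nonneg fun i _ => ?_
      rw [real_inner_smul_left]
      rcases eq_or_lt_of_le (hprop i).2.1 with hc0 | hcpos
      · rw [← hc0, zero_mul]
      · have hfi0 : MvPolynomial.eval (fun j => u j) (f i) = 0 := by
          rcases mul_eq_zero.1 (hprop i).2.2 with h | h
          · exact absurd h.symm (ne_of_lt hcpos)
          · exact h
        refine mul_nonneg (le_of_lt hcpos) ?_
        refine aux_slope_nonneg (hray i (s - u)) (by simpa using hfi0) ?_
        filter_upwards [Ioc_mem_nhdsGT one_pos] with t ht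
        have hmem : u + t • (s - u) ∈ A :=
          hconv.add_smul_sub_mem huA hs ⟨le_of_lt ht.1, ht.2⟩
        rw [hA] at hmem
        exact hmem i
    have hid : (s - u) + (u - p) = s - p := by abel
    have hsq := norm_add_sq_real (s - u) (u - p)
    rw [hid, real_inner_comm] at hsq
    nlinarith [norm_nonneg (s - u), norm_nonneg (u - p), norm_nonneg (s - p)]
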